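/- Let k ≥ 1 and let A ∈ (ℕ*)^k be an even tuple (its last entry is even). For every tuple I of positive integers, the preimage ψ_A^{-1}({I}) equals {I, I + e_k, I + 2e_k} if I ∈ S_{A−e_k}; equals {I + 2e_k} if I ∈ S_A ∪ N_A; and equals {I} otherwise. -/

import Mathlib

open scoped Classical

/-- Tuples of positive integers, modelled as lists of naturals with positive entries. -/
def IsPosTuple (I : List ℕ) : Prop := ∀ x ∈ I, 0 < x

/-- The `k`-th prefix map `p_k`. -/
def prefixMap (k : ℕ) (I : List ℕ) : List ℕ := if I.length < k then I else I.take k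

/-- Add `m` to the `k`-th entry (1-based) of a tuple: `I + m·e_k`. -/
def addAt (k m : ℕ) (I : List ℕ) : List ℕ := List.modify I (k - 1) (· + m)

/-- Subtract `m` from the `k`-th entry (1-based) of a tuple: `I − m·e_k`. -/
def subAt (k m : ℕ) (I : List ℕ) : List ℕ := List.modify I (k - 1) (· - m)

/-- `S_A = {I : p_k(I) = A}` (among tuples of positive integers), where `k = |A|`. -/
def setS (A : List ℕ) : Set (List ℕ) :=
  {I | IsPosTuple I ∧ prefixMap A.length I = A}

/-- `N_A = {I : ∃ m ∈ ℕ*, p_k(I) = A + m·e_k}` (among tuples of positive integers). -/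
def setN (A : List ℕ) : Set (List ℕ) :=
  {I | IsPosTuple I ∧ ∃ m : ℕ, 0 < m ∧ prefixMap A.length I = addAt A.length m A}

/-- `F_A`: the complement of `S_A ∪ N_A` in the set of all tuples of positive integers. -/
def setF (A : List ℕ) : Set (List ℕ) :=
  {I | IsPosTuple I} \ (setS A ∪ setN A)

/-- The relabelling map `ψ_A` (for `A` even): `I ↦ I − e_k` on `S_A`,
`I ↦ I − 2·e_k` on `N_A`, and the identity on `F_A`. -/
noncomputable def psi (A : List ℕ) (I : List ℕ) : List ℕ :=
  if I ∈ setS A then subAt A.length 1 I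
  else if I ∈ setN A then subAt A.length 2 I
  else I

/-! ### Auxiliary lemmas -/

lemma isPosTuple_iff' (I : List ℕ) :
    IsPosTuple I ↔ ∀ (i x : ℕ), I[i]? = some x → 0 < x := by
  constructor
  · intro h i x hx
    exact h x (List.mem_iff_getElem?.2 ⟨i, hx⟩)
  · intro h x hx
    obtain ⟨i, hi⟩ := List.mem_iff_getElem?.1 hx
    exact h i x hi

@[simp] lemma length_addAt (k m : ℕ) (I : List ℕ) : (addAt k m I).length = I.length :=
  List.length_modify ..

@[simp] lemma length_subAt (k m : ℕ) (I : List ℕ) : (subAt k m I).length = I.length :=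
  List.length_modify ..

lemma getElem?_addAt_self (k m : ℕ) (I : List ℕ) :
    (addAt k m I)[k - 1]? = (· + m) <$> I[k - 1]? := by
  simp [addAt, List.getElem?_modify]

lemma getElem?_addAt_ne (k m : ℕ) (I : List ℕ) {i : ℕ} (h : i ≠ k - 1) :
    (addAt k m I)[i]? = I[i]? := by
  simp only [addAt, List.getElem?_modify]
  cases I[i]? <;> simp [Ne.symm h]

lemma getElem?_subAt_self (k m : ℕ) (I : List ℕ) :
    (subAt k m I)[k - 1]? = (· - m) <$> I[k - 1]? := by
  simp [subAt, List.getElem?_modify]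

lemma getElem?_subAt_ne (k m : ℕ) (I : List ℕ) {i : ℕ} (h : i ≠ k - 1) :
    (subAt k m I)[i]? = I[i]? := by
  simp only [subAt, List.getElem?_modify]
  cases I[i]? <;> simp [Ne.symm h]

lemma subAt_addAt_cancel (k m : ℕ) (I : List ℕ) : subAt k m (addAt k m I) = I := by
  apply List.ext_getElem?
  intro i
  by_cases h : i = k - 1
  · subst h
    rw [getElem?_subAt_self, getElem?_addAt_self]
    cases I[k - 1]? <;> simp
  · rw [getElem?_subAt_ne _ _ _ h, getElem?_addAt_ne _ _ _ h]

lemma addAt_subAt_cancel (k m : ℕ) (I : List ℕ) {c : ℕ} (hc : I[k - 1]? = some c)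
    (hm : m ≤ c) : addAt k m (subAt k m I) = I := by
  apply List.ext_getElem?
  intro i
  by_cases h : i = k - 1
  · subst h
    rw [getElem?_addAt_self, getElem?_subAt_self, hc]
    simp only [Option.map_eq_map, Option.map_some]
    congr 1
    omega
  · rw [getElem?_addAt_ne _ _ _ h, getElem?_subAt_ne _ _ _ h]

lemma isPosTuple_addAt (k m : ℕ) {I : List ℕ} (h : IsPosTuple I) :
    IsPosTuple (addAt k m I) := by
  rw [isPosTuple_iff'] at h ⊢
  intro i x hx
  by_cases hi : i = k - 1
  · subst hi
    rw [getElem?_addAt_self] at hx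
    cases hI : I[k - 1]? with
    | none => rw [hI] at hx; simp at hx
    | some y =>
      rw [hI] at hx
      simp only [Option.map_eq_map, Option.map_some, Option.some_inj] at hx
      have := h _ _ hI
      omega
  · rw [getElem?_addAt_ne _ _ _ hi] at hx
    exact h _ _ hx

lemma isPosTuple_subAt (k m : ℕ) {I : List ℕ} (h : IsPosTuple I) {c : ℕ}
    (hc : I[k - 1]? = some c) (hm : m < c) : IsPosTuple (subAt k m I) := by
  rw [isPosTuple_iff'] at h ⊢
  intro i x hx
  by_cases hi : i = k - 1
  · subst hi
    rw [getElem?_subAt_self, hc] at hx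
    simp only [Option.map_eq_map, Option.map_some, Option.some_inj] at hx
    omega
  · rw [getElem?_subAt_ne _ _ _ hi] at hx
    exact h _ _ hx

lemma take_eq_iff {k : ℕ} {J B : List ℕ} (hJ : k ≤ J.length) (hB : B.length = k) :
    J.take k = B ↔ ∀ i < k, J[i]? = B[i]? := by
  constructor
  · intro h i hi
    have := congrArg (fun l => l[i]?) h
    simpa [List.getElem?_take, hi] using this
  · intro h
    apply List.ext_getElem?
    intro i
    rw [List.getElem?_take]
    split
    · exact h i ‹_›
    · rw [List.getElem?_eq_none (by omega)]

lemma prefixMap_eq_iff {k : ℕ} (hk : 1 ≤ k) {J B : List ℕ} (hB : B.length = k) :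
    prefixMap k J = B ↔ k ≤ J.length ∧ ∀ i < k, J[i]? = B[i]? := by
  unfold prefixMap
  split
  · constructor
    · intro h; subst h; omega
    · intro ⟨h, _⟩; omega
  · rw [take_eq_iff (by omega) hB]
    exact ⟨fun h => ⟨by omega, h⟩, fun h => h.2⟩

/-- Membership in `setS B` for `B` that agrees with `A` off index `k-1` and has
entry `b` at index `k-1`. -/
lemma mem_setS_iff {k : ℕ} (hk : 1 ≤ k) {A B : List ℕ} (hA : A.length = k)
    (hB : B.length = k) (hoff : ∀ i < k, i ≠ k - 1 → B[i]? = A[i]?)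
    {b : ℕ} (hb : B[k - 1]? = some b) (J : List ℕ) :
    J ∈ setS B ↔ IsPosTuple J ∧ k ≤ J.length ∧
      (∀ i < k, i ≠ k - 1 → J[i]? = A[i]?) ∧ J[k - 1]? = some b := by
  unfold setS
  simp only [Set.mem_setOf_eq, hB]
  rw [prefixMap_eq_iff hk hB]
  constructor
  · rintro ⟨h1, h2, h3⟩
    refine ⟨h1, h2, fun i hi hne => ?_, ?_⟩
    · rw [h3 i hi, hoff i hi hne]
    · rw [h3 (k - 1) (by omega), hb]
  · rintro ⟨h1, h2, h3, h4⟩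
    refine ⟨h1, h2, fun i hi => ?_⟩
    by_cases hne : i = k - 1
    · subst hne; rw [h4, hb]
    · rw [h3 i hi hne, hoff i hi hne]

lemma mem_setN_iff {k : ℕ} (hk : 1 ≤ k) {A : List ℕ} (hA : A.length = k)
    {a : ℕ} (ha : A[k - 1]? = some a) (J : List ℕ) :
    J ∈ setN A ↔ IsPosTuple J ∧ k ≤ J.length ∧
      (∀ i < k, i ≠ k - 1 → J[i]? = A[i]?) ∧ ∃ c, J[k - 1]? = some c ∧ a < c := by
  unfold setN
  simp only [Set.mem_setOf_eq, hA]
  constructor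
  · rintro ⟨h1, m, hm, h2⟩
    rw [prefixMap_eq_iff hk (by simp [hA])] at h2
    obtain ⟨hlen, hall⟩ := h2
    refine ⟨h1, hlen, fun i hi hne => ?_, a + m, ?_, by omega⟩
    · rw [hall i hi, getElem?_addAt_ne _ _ _ hne]
    · rw [hall (k - 1) (by omega), getElem?_addAt_self, ha]
      simp
  · rintro ⟨h1, hlen, hall, c, hc, hac⟩
    refine ⟨h1, c - a, by omega, ?_⟩
    rw [prefixMap_eq_iff hk (by simp [hA])]
    refine ⟨hlen, fun i hi => ?_⟩
    by_cases hne : i = k - 1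
    · subst hne
      rw [hc, getElem?_addAt_self, ha]
      simp only [Option.map_eq_map, Option.map_some, Option.some_inj]
      omega
    · rw [hall i hi hne, getElem?_addAt_ne _ _ _ hne]

/-- for an even tuple `A` of positive integers of length `k ≥ 1` and every
tuple `I` of positive integers, the preimage `ψ_A⁻¹({I})` (within the set of all tuples
of positive integers) is `{I, I + e_k, I + 2e_k}` if `I ∈ S_{A−e_k}`;
`{I + 2e_k}` if `I ∈ S_A ∪ N_A`; and `{I}` otherwise. -/
theorem psi_preimage_singleton (k : ℕ) (hk : 1 ≤ k) (A : List ℕ)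
    (hlen : A.length = k) (hpos : IsPosTuple A)
    (hne : A ≠ []) (heven : Even (A.getLast hne))
    (I : List ℕ) (hI : IsPosTuple I) :
    (I ∈ setS (subAt k 1 A) →
        {J | IsPosTuple J ∧ psi A J = I} = {I, addAt k 1 I, addAt k 2 I}) ∧
    (I ∈ setS A ∪ setN A →
        {J | IsPosTuple J ∧ psi A J = I} = {addAt k 2 I}) ∧
    (I ∉ setS (subAt k 1 A) → I ∉ setS A ∪ setN A →
        {J | IsPosTuple J ∧ psi A J = I} = {I}) := by
  -- set up the last entry `a` of `A`, with `2 ≤ a`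
  set a : ℕ := A.getLast hne with ha_def
  have ha : A[k - 1]? = some a := by
    rw [ha_def, List.getLast_eq_getElem]
    rw [List.getElem?_eq_getElem (by omega)]
    congr 1
    congr 1
    omega
  have ha2 : 2 ≤ a := by
    have h1 : 0 < a := hpos a (List.getLast_mem hne)
    obtain ⟨t, ht⟩ := heven
    omega
  -- characterizations of the three sets
  have hA'len : (subAt k 1 A).length = k := by simp [hlen]
  have hA'off : ∀ i < k, i ≠ k - 1 → (subAt k 1 A)[i]? = A[i]? := fun i _ hne' =>
    getElem?_subAt_ne _ _ _ hne'
  have hA'at : (subAt k 1 A)[k - 1]? = some (a - 1) := by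
    rw [getElem?_subAt_self, ha]; rfl
  have hS : ∀ J, J ∈ setS A ↔ IsPosTuple J ∧ k ≤ J.length ∧
      (∀ i < k, i ≠ k - 1 → J[i]? = A[i]?) ∧ J[k - 1]? = some a :=
    mem_setS_iff hk hlen hlen (fun _ _ _ => rfl) ha
  have hS' : ∀ J, J ∈ setS (subAt k 1 A) ↔ IsPosTuple J ∧ k ≤ J.length ∧
      (∀ i < k, i ≠ k - 1 → J[i]? = A[i]?) ∧ J[k - 1]? = some (a - 1) :=
    mem_setS_iff hk hlen hA'len hA'off hA'at
  have hN : ∀ J, J ∈ setN A ↔ IsPosTuple J ∧ k ≤ J.length ∧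
      (∀ i < k, i ≠ k - 1 → J[i]? = A[i]?) ∧ ∃ c, J[k - 1]? = some c ∧ a < c :=
    mem_setN_iff hk hlen ha
  have hpsidef : ∀ J, psi A J =
      if J ∈ setS A then subAt k 1 J else if J ∈ setN A then subAt k 2 J else J := by
    intro J; rw [psi, hlen]
  -- behaviour of addAt on the characterizing data
  have haddoff : ∀ (m : ℕ) (J : List ℕ), (∀ i < k, i ≠ k - 1 → J[i]? = A[i]?) →
      (∀ i < k, i ≠ k - 1 → (addAt k m J)[i]? = A[i]?) := by
    intro m J h i hi hne'
    rw [getElem?_addAt_ne _ _ _ hne', h i hi hne']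
  have haddat : ∀ (m c : ℕ) (J : List ℕ), J[k - 1]? = some c →
      (addAt k m J)[k - 1]? = some (c + m) := by
    intro m c J h
    rw [getElem?_addAt_self, h]; rfl
  have hsuboff : ∀ (m : ℕ) (J : List ℕ), (∀ i < k, i ≠ k - 1 → J[i]? = A[i]?) →
      (∀ i < k, i ≠ k - 1 → (subAt k m J)[i]? = A[i]?) := by
    intro m J h i hi hne'
    rw [getElem?_subAt_ne _ _ _ hne', h i hi hne']
  have hsubat : ∀ (m c : ℕ) (J : List ℕ), J[k - 1]? = some c →
      (subAt k m J)[k - 1]? = some (c - m) := by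
    intro m c J h
    rw [getElem?_subAt_self, h]; rfl
  refine ⟨?_, ?_, ?_⟩
  -- Case 1: I ∈ S_{A - e_k}
  · intro hmem
    obtain ⟨hIpos, hIlen, hIQ, hIat⟩ := (hS' I).1 hmem
    have hI_not_S : I ∉ setS A := by
      rw [hS]; rintro ⟨_, _, _, h⟩; rw [hIat] at h
      simp only [Option.some_inj] at h; omega
    have hI_not_N : I ∉ setN A := by
      rw [hN]; rintro ⟨_, _, _, c, hc, hac⟩; rw [hIat] at hc
      simp only [Option.some_inj] at hc; omega
    ext J
    simp only [Set.mem_setOf_eq, Set.mem_insert_iff, Set.mem_singleton_iff]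
    constructor
    · rintro ⟨hJpos, hψ⟩
      rw [hpsidef] at hψ
      split_ifs at hψ with h1 h2
      · -- J ∈ S_A : J = addAt k 1 I
        obtain ⟨_, _, _, hJat⟩ := (hS J).1 h1
        right; left
        rw [← hψ, addAt_subAt_cancel k 1 J hJat (by omega)]
      · -- J ∈ N_A : J = addAt k 2 I
        obtain ⟨_, _, _, c, hJat, hac⟩ := (hN J).1 h2
        right; right
        rw [← hψ, addAt_subAt_cancel k 2 J hJat (by omega)]
      · left; exact hψ
    · rintro (rfl | rfl | rfl)
      · exact ⟨hIpos, by rw [hpsidef]; simp [hI_not_S, hI_not_N]⟩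
      · have hmem1 : addAt k 1 I ∈ setS A := by
          rw [hS]
          refine ⟨isPosTuple_addAt _ _ hIpos, by simp [hIlen],
            haddoff 1 I hIQ, ?_⟩
          rw [haddat 1 (a - 1) I hIat]; congr 1; omega
        exact ⟨isPosTuple_addAt _ _ hIpos,
          by rw [hpsidef]; simp only [hmem1, if_pos]; exact subAt_addAt_cancel k 1 I⟩
      · have hnot1 : addAt k 2 I ∉ setS A := by
          rw [hS]; rintro ⟨_, _, _, h⟩
          rw [haddat 2 (a - 1) I hIat] at h
          simp only [Option.some_inj] at h; omega
        have hmem2 : addAt k 2 I ∈ setN A := by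
          rw [hN]
          exact ⟨isPosTuple_addAt _ _ hIpos, by simp [hIlen],
            haddoff 2 I hIQ, a - 1 + 2, haddat 2 (a - 1) I hIat, by omega⟩
        exact ⟨isPosTuple_addAt _ _ hIpos,
          by rw [hpsidef]; simp only [hnot1, if_neg, not_false_iff, hmem2, if_pos]
             exact subAt_addAt_cancel k 2 I⟩
  -- Case 2: I ∈ S_A ∪ N_A
  · intro hmem
    -- extract entry c ≥ a of I
    obtain ⟨c, hIat, hac, hIlen, hIQ⟩ :
        ∃ c, I[k - 1]? = some c ∧ a ≤ c ∧ k ≤ I.length ∧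
          (∀ i < k, i ≠ k - 1 → I[i]? = A[i]?) := by
      rcases hmem with h | h
      · obtain ⟨_, h2, h3, h4⟩ := (hS I).1 h
        exact ⟨a, h4, le_refl a, h2, h3⟩
      · obtain ⟨_, h2, h3, c, h4, h5⟩ := (hN I).1 h
        exact ⟨c, h4, le_of_lt h5, h2, h3⟩
    ext J
    simp only [Set.mem_setOf_eq, Set.mem_singleton_iff]
    constructor
    · rintro ⟨hJpos, hψ⟩
      rw [hpsidef] at hψ
      split_ifs at hψ with h1 h2
      · -- impossible: subAt k 1 J has entry a - 1 < a ≤ c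
        obtain ⟨_, _, _, hJat⟩ := (hS J).1 h1
        have := hsubat 1 a J hJat
        rw [hψ, hIat] at this
        simp only [Option.some_inj] at this; omega
      · obtain ⟨_, _, _, d, hJat, had⟩ := (hN J).1 h2
        rw [← hψ, addAt_subAt_cancel k 2 J hJat (by omega)]
      · -- impossible: J = I but I ∈ S ∪ N
        rw [hψ] at h1 h2
        rcases hmem with h | h
        · exact absurd h h1
        · exact absurd h h2
    · rintro rfl
      have hnot1 : addAt k 2 I ∉ setS A := by
        rw [hS]; rintro ⟨_, _, _, h⟩
        rw [haddat 2 c I hIat] at h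
        simp only [Option.some_inj] at h; omega
      have hmem2 : addAt k 2 I ∈ setN A := by
        rw [hN]
        exact ⟨isPosTuple_addAt _ _ hI, by simp [hIlen],
          haddoff 2 I hIQ, c + 2, haddat 2 c I hIat, by omega⟩
      exact ⟨isPosTuple_addAt _ _ hI,
        by rw [hpsidef]; simp only [hnot1, if_neg, not_false_iff, hmem2, if_pos]
           exact subAt_addAt_cancel k 2 I⟩
  -- Case 3: I ∉ S_{A-e_k} and I ∉ S_A ∪ N_A
  · intro hnot1 hnot2
    have hI_not_S : I ∉ setS A := fun h => hnot2 (Or.inl h)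
    have hI_not_N : I ∉ setN A := fun h => hnot2 (Or.inr h)
    ext J
    simp only [Set.mem_setOf_eq, Set.mem_singleton_iff]
    constructor
    · rintro ⟨hJpos, hψ⟩
      rw [hpsidef] at hψ
      split_ifs at hψ with h1 h2
      · -- J ∈ S_A : then I = subAt k 1 J ∈ S_{A - e_k}, contradiction
        obtain ⟨_, hJlen, hJQ, hJat⟩ := (hS J).1 h1
        exfalso; apply hnot1
        rw [hS']
        refine ⟨hI, ?_, ?_, ?_⟩
        · rw [← hψ]; simp; omega
        · rw [← hψ]; exact hsuboff 1 J hJQ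
        · rw [← hψ]; exact hsubat 1 a J hJat
      · -- J ∈ N_A : entry a + m; I = subAt k 2 J lands in S_{A-e_k}, S_A or N_A
        obtain ⟨_, hJlen, hJQ, d, hJat, had⟩ := (hN J).1 h2
        exfalso
        have hIlen' : k ≤ I.length := by rw [← hψ]; simp; omega
        have hIQ' : ∀ i < k, i ≠ k - 1 → I[i]? = A[i]? := by
          rw [← hψ]; exact hsuboff 2 J hJQ
        have hIat' : I[k - 1]? = some (d - 2) := by
          rw [← hψ]; exact hsubat 2 d J hJat
        rcases Nat.lt_trichotomy d (a + 2) with h | h | h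
        · -- d = a + 1 : I ∈ S_{A - e_k}
          apply hnot1; rw [hS']
          refine ⟨hI, hIlen', hIQ', ?_⟩
          rw [hIat']; congr 1; omega
        · -- d = a + 2 : I ∈ S_A
          apply hI_not_S; rw [hS]
          refine ⟨hI, hIlen', hIQ', ?_⟩
          rw [hIat']; congr 1; omega
        · -- d > a + 2 : I ∈ N_A
          apply hI_not_N; rw [hN]
          exact ⟨hI, hIlen', hIQ', d - 2, hIat', by omega⟩
      · exact hψ
    · rintro rfl
      exact ⟨hI, by rw [hpsidef]; simp [hI_not_S, hI_not_N]⟩
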